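/- Let n ≥ 1 be an integer and 0 < a < b < π. Then (1/2π) ∫₀^{2π} cos(n x) · log(1 - cos a cos b - sin a sin b cos x) dx = -(1/n) tan^n(a/2) cot^n(b/2). -/

import Mathlib

open Real intervalIntegral MeasureTheory

lemma contcos (c : ℝ) : Continuous (fun x : ℝ => Real.cos (c*x)) :=
  Real.continuous_cos.comp (continuous_const.mul continuous_id)

lemma intcos (m : ℤ) (hm : m ≠ 0) : ∫ x in (0:ℝ)..(2*π), Real.cos (m*x) = 0 := by
  have h : ((m:ℝ)) ≠ 0 := Int.cast_ne_zero.mpr hm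
  rw [intervalIntegral.integral_comp_mul_left Real.cos h, integral_cos]
  have h1 : (m:ℝ) * (2*π) = (2*m : ℤ) * π := by push_cast; ring
  have h2 : (m:ℝ) * 0 = (0:ℤ) * π := by push_cast; ring
  rw [h1, h2, Real.sin_int_mul_pi, Real.sin_int_mul_pi]
  simp

lemma orth (n k : ℕ) (hn : 1 ≤ n) :
    ∫ x in (0:ℝ)..(2*π), Real.cos (n*x) * Real.cos (k*x)
      = if n = k then π else 0 := by
  have key : ∀ x:ℝ, Real.cos (n*x) * Real.cos (k*x)
      = (1/2) * Real.cos (((n:ℝ)+k)*x) + (1/2) * Real.cos (((n:ℝ)-k)*x) := by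
    intro x; rw [add_mul, sub_mul, Real.cos_add, Real.cos_sub]; ring
  rw [intervalIntegral.integral_congr (fun x _ => key x)]
  have i1 : ∫ x in (0:ℝ)..(2*π), Real.cos (((n:ℝ)+k)*x) = 0 := by
    have : ((n:ℝ)+k) = ((n+k : ℤ) : ℝ) := by push_cast; ring
    rw [this]; exact intcos _ (by omega)
  rw [intervalIntegral.integral_add (f := fun x => 1/2 * Real.cos (((n:ℝ)+k)*x)) (g := fun x => 1/2 * Real.cos (((n:ℝ)-k)*x)) ((continuous_const.mul (contcos _)).intervalIntegrable _ _)
      ((continuous_const.mul (contcos _)).intervalIntegrable _ _),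
    intervalIntegral.integral_const_mul, intervalIntegral.integral_const_mul, i1]
  by_cases h : n = k
  · subst h
    have i2 : ∫ x in (0:ℝ)..(2*π), Real.cos (((n:ℝ)-n)*x) = 2*π := by
      simp [sub_self]
    rw [i2]; simp
  · have i2 : ∫ x in (0:ℝ)..(2*π), Real.cos (((n:ℝ)-k)*x) = 0 := by
      have : ((n:ℝ)-k) = ((n-k : ℤ) : ℝ) := by push_cast; ring
      rw [this]; exact intcos _ (by simpa using sub_ne_zero.mpr (fun hh => h (by exact_mod_cast hh)))
    rw [i2]; simp [h]

lemma kernel_pos {r : ℝ} (hr : |r| < 1) (x : ℝ) : 0 < 1 - 2*r*Real.cos x + r^2 := by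
  have h3 : 2*r*Real.cos x ≤ 2 * |r| := by
    calc 2*r*Real.cos x ≤ |2*r*Real.cos x| := le_abs_self _
    _ = 2 * |r| * |Real.cos x| := by rw [abs_mul, abs_mul]; norm_num
    _ ≤ 2 * |r| * 1 := by
        have := Real.abs_cos_le_one x
        have := abs_nonneg r
        nlinarith
    _ = 2 * |r| := mul_one _
  nlinarith [sq_abs r, sq_nonneg (1-|r|)]

lemma series (r x : ℝ) (hr : |r| < 1) :
    HasSum (fun k : ℕ => -2 * (r^k / k) * Real.cos (k * x))
      (Real.log (1 - 2*r*Real.cos x + r^2)) := by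
  set z : ℂ := (r:ℂ) * Complex.exp (x * Complex.I) with hzdef
  have hz : ‖z‖ < 1 := by
    rw [hzdef]
    simp only [norm_mul, Complex.norm_real, Real.norm_eq_abs, Complex.norm_exp_ofReal_mul_I,
      mul_one]
    exact hr
  have h := Complex.hasSum_taylorSeries_neg_log hz
  have hre := Complex.hasSum_re h
  have hterm : ∀ n : ℕ, ((z^n / n : ℂ)).re = (r^n/n) * Real.cos (n*x) := by
    intro n
    have he : z^n / n = (((r^n/n : ℝ)):ℂ) * Complex.exp ((((n:ℝ)*x):ℝ) * Complex.I) := by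
      rw [hzdef, mul_pow, ← Complex.exp_nat_mul]
      push_cast
      ring
    rw [he, Complex.re_ofReal_mul, Complex.exp_ofReal_mul_I_re]
  have habs : ‖1 - z‖^2 = 1 - 2*r*Real.cos x + r^2 := by
    rw [Complex.sq_norm, Complex.normSq_apply]
    have hre1 : (1 - z).re = 1 - r * Real.cos x := by
      simp [hzdef, Complex.exp_ofReal_mul_I_re]
    have him1 : (1 - z).im = -(r * Real.sin x) := by
      simp [hzdef, Complex.exp_ofReal_mul_I_im]
    rw [hre1, him1]
    nlinarith [Real.sin_sq_add_cos_sq x]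
  have hne : (1 : ℂ) - z ≠ 0 := by
    intro hh
    rw [hh] at habs
    simp at habs
    nlinarith [kernel_pos hr x]
  have hlog : (-(Complex.log (1-z))).re = -(1/2) * Real.log (1 - 2*r*Real.cos x + r^2) := by
    rw [Complex.neg_re, Complex.log_re, ← habs, Real.log_pow]
    push_cast; ring
  rw [funext hterm, hlog] at hre
  have h2 := hre.mul_left (-2)
  have heq : (fun k:ℕ => -2 * (r^k / k) * Real.cos (k*x))
      = fun i:ℕ => -2*(r^i/i*Real.cos (i*x)) := by funext i; ring
  rw [heq, show Real.log (1 - 2*r*Real.cos x + r^2)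
      = -2 * (-(1/2)*Real.log (1 - 2*r*Real.cos x + r^2)) by ring]
  exact h2

lemma coefbd (r : ℝ) (k : ℕ) : |r^k/k| ≤ |r|^k := by
  cases k with
  | zero => simp
  | succ m =>
    rw [abs_div, abs_pow]
    have h1 : (1:ℝ) ≤ |((m+1 : ℕ):ℝ)| := by
      rw [abs_of_nonneg (by positivity)]
      exact_mod_cast Nat.one_le_iff_ne_zero.mpr (Nat.succ_ne_zero m)
    calc |r|^(m+1) / |((m+1:ℕ):ℝ)| ≤ |r|^(m+1) / 1 := by
          apply div_le_div_of_nonneg_left (by positivity) one_pos h1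
      _ = |r|^(m+1) := div_one _
  
lemma classic (n : ℕ) (hn : 1 ≤ n) (r : ℝ) (hr : |r| < 1) :
    ∫ x in (0:ℝ)..(2*π), Real.cos (n*x) * Real.log (1 - 2*r*Real.cos x + r^2)
      = -2*π*r^n/n := by
  have hpi : (0:ℝ) ≤ 2*π := by positivity
  set μ : Measure ℝ := volume.restrict (Set.Ioc (0:ℝ) (2*π)) with hμ
  set F : ℕ → ℝ → ℝ := fun k x => Real.cos (n*x) * (-2*(r^k/k)*Real.cos (k*x)) with hF
  have hFc : ∀ k, Continuous (F k) := by
    intro k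
    exact ((contcos _).mul ((continuous_const.mul (contcos _))))
  have hF_int : ∀ k, Integrable (F k) μ :=
    fun k => (hFc k).integrableOn_Ioc
  have hbd : ∀ k x, ‖F k x‖ ≤ 2 * |r|^k := by
    intro k x
    rw [hF]
    simp only [Real.norm_eq_abs, abs_mul]
    have c1 := Real.abs_cos_le_one (n*x)
    have c2 := Real.abs_cos_le_one (k*x)
    have c3 := coefbd r k
    have c4 : |(-2 : ℝ)| = 2 := by norm_num
    have h0 : (0:ℝ) ≤ |r^k/k| := abs_nonneg _
    calc |Real.cos (n*x)| * (|(-2:ℝ)| * |r^k/k| * |Real.cos (k*x)|)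
        ≤ 1 * (|(-2:ℝ)| * |r|^k * 1) := by
          gcongr
      _ = 2 * |r|^k := by rw [c4]; ring
  have hF_sum : Summable fun k => ∫ x, ‖F k x‖ ∂μ := by
    apply Summable.of_nonneg_of_le (fun k => integral_nonneg (fun x => norm_nonneg _))
      (fun k => ?_) (((summable_geometric_of_lt_one (abs_nonneg r) hr).mul_left 2).mul_right (2*π))
    calc ∫ x, ‖F k x‖ ∂μ ≤ ∫ _x, 2 * |r|^k ∂μ := by
          apply integral_mono (hF_int k).norm (integrable_const _)
          intro x; exact hbd k x
      _ = 2 * |r|^k * (2*π) := by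
          rw [MeasureTheory.integral_const, hμ, measureReal_restrict_apply_univ, Real.volume_real_Ioc,
            smul_eq_mul, max_eq_left (by rw [sub_zero]; positivity : (0:ℝ) ≤ 2*π - 0)]
          ring
  have H := MeasureTheory.hasSum_integral_of_summable_integral_norm hF_int hF_sum
  have htsum : ∀ x : ℝ, ∑' k, F k x = Real.cos (n*x) * Real.log (1 - 2*r*Real.cos x + r^2) := by
    intro x
    exact ((series r x hr).mul_left (Real.cos (n*x))).tsum_eq
  have hInt : ∀ k, ∫ x, F k x ∂μ = if k = n then -2*(r^n/n)*π else 0 := by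
    intro k
    have : ∫ x, F k x ∂μ = ∫ x in (0:ℝ)..(2*π), F k x := by
      rw [intervalIntegral.integral_of_le hpi]
    rw [this]
    have heq : ∀ x, F k x = (-2*(r^k/k)) * (Real.cos (n*x) * Real.cos (k*x)) := by
      intro x; rw [hF]; ring
    rw [intervalIntegral.integral_congr (fun x _ => heq x),
      intervalIntegral.integral_const_mul, orth n k hn]
    by_cases h : n = k
    · subst h; simp
    · rw [if_neg h, if_neg (fun hh => h hh.symm)]; ring
  rw [funext hInt] at H
  have H2 : HasSum (fun k => if k = n then -2*(r^n/n)*π else 0) (-2*(r^n/n)*π) :=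
    hasSum_ite_eq n _
  have hval := H.unique H2
  have : ∫ x, (∑' k, F k x) ∂μ = ∫ x in (0:ℝ)..(2*π), Real.cos (n*x) * Real.log (1 - 2*r*Real.cos x + r^2) := by
    rw [intervalIntegral.integral_of_le hpi]
    exact integral_congr_ae (Filter.Eventually.of_forall (fun x => htsum x))
  rw [this] at hval
  rw [hval]; ring
set_option maxHeartbeats 1000000 in
theorem stmt_17 (n : ℕ) (hn : 1 ≤ n) (a b : ℝ) (ha : 0 < a) (hab : a < b) (hb : b < π) :
    (1 / (2 * π)) * ∫ x in (0:ℝ)..(2 * π),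
        Real.cos (n * x) * Real.log (1 - Real.cos a * Real.cos b
          - Real.sin a * Real.sin b * Real.cos x)
      = -(1 / n) * Real.tan (a / 2) ^ n * Real.cot (b / 2) ^ n := by
  have hpi := Real.pi_pos
  have ha2 : 0 < a/2 := by linarith
  have hb2 : b/2 < π/2 := by linarith
  have hab2 : a/2 < b/2 := by linarith
  set sa := Real.sin (a/2) with hsa
  set ca := Real.cos (a/2) with hca
  set sb := Real.sin (b/2) with hsb
  set cb := Real.cos (b/2) with hcb
  have hsa0 : 0 < sa := Real.sin_pos_of_pos_of_lt_pi ha2 (by linarith)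
  have hca0 : 0 < ca := Real.cos_pos_of_mem_Ioo ⟨by linarith, by linarith⟩
  have hsb0 : 0 < sb := Real.sin_pos_of_pos_of_lt_pi (by linarith) (by linarith)
  have hcb0 : 0 < cb := Real.cos_pos_of_mem_Ioo ⟨by linarith, hb2⟩
  have pya : sa^2 + ca^2 = 1 := Real.sin_sq_add_cos_sq _
  have pyb : sb^2 + cb^2 = 1 := Real.sin_sq_add_cos_sq _
  set t := Real.tan (a/2) with ht
  set s := Real.tan (b/2) with hs
  have htv : t = sa/ca := Real.tan_eq_sin_div_cos _
  have hsv : s = sb/cb := Real.tan_eq_sin_div_cos _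
  have ht0 : 0 < t := by rw [htv]; positivity
  have hs0 : 0 < s := by rw [hsv]; positivity
  have hts : t < s := Real.tan_lt_tan_of_nonneg_of_lt_pi_div_two (le_of_lt ha2) hb2 hab2
  set r := t/s with hrdef
  have hr0 : 0 < r := by positivity
  have hr1 : r < 1 := (div_lt_one hs0).mpr hts
  have hrabs : |r| < 1 := by rw [abs_of_pos hr0]; exact hr1
  have hrv : r = (sa*cb)/(ca*sb) := by
    rw [hrdef, htv, hsv]
    field_simp
  set C := 2*ca^2*sb^2 with hC
  have hC0 : 0 < C := by positivity
  have e1 : Real.cos a = 2*ca^2 - 1 := by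
    rw [show a = 2*(a/2) by ring, Real.cos_two_mul]
  have e2 : Real.cos b = 2*cb^2 - 1 := by
    rw [show b = 2*(b/2) by ring, Real.cos_two_mul]
  have e3 : Real.sin a = 2*sa*ca := by
    rw [show a = 2*(a/2) by ring, Real.sin_two_mul]
  have e4 : Real.sin b = 2*sb*cb := by
    rw [show b = 2*(b/2) by ring, Real.sin_two_mul]
  have hid : ∀ x : ℝ, 1 - Real.cos a * Real.cos b - Real.sin a * Real.sin b * Real.cos x
      = C * (1 - 2*r*Real.cos x + r^2) := by
    intro x
    rw [e1, e2, e3, e4, hrv, hC]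
    have h1 : ca ≠ 0 := ne_of_gt hca0
    have h2 : sb ≠ 0 := ne_of_gt hsb0
    obtain ⟨rr, hrr⟩ : ∃ rr : ℝ, rr = (sa*cb)/(ca*sb) := ⟨_, rfl⟩
    rw [← hrr]
    have m1 : (2*ca^2*sb^2) * rr = 2*sa*ca*sb*cb := by rw [hrr]; field_simp
    have m2 : (2*ca^2*sb^2) * rr^2 = 2*sa^2*cb^2 := by rw [hrr]; field_simp
    linear_combination (2*Real.cos x)*m1 - m2 - 2*cb^2*pya - 2*ca^2*pyb
  have hsplit : ∀ x : ℝ, Real.cos (n*x) * Real.log (1 - Real.cos a * Real.cos b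
      - Real.sin a * Real.sin b * Real.cos x)
      = Real.cos (n*x) * Real.log C + Real.cos (n*x) * Real.log (1 - 2*r*Real.cos x + r^2) := by
    intro x
    rw [hid x, Real.log_mul (ne_of_gt hC0) (ne_of_gt (kernel_pos hrabs x))]
    ring
  rw [intervalIntegral.integral_congr (fun x _ => hsplit x)]
  have hQc : Continuous (fun x : ℝ => Real.log (1 - 2*r*Real.cos x + r^2)) := by
    apply Continuous.log
    · continuity
    · intro x; exact ne_of_gt (kernel_pos hrabs x)
  have int1 : IntervalIntegrable (fun x : ℝ => Real.cos (n*x) * Real.log C) volume 0 (2*π) :=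
    ((contcos _).mul continuous_const).intervalIntegrable _ _
  have int2 : IntervalIntegrable (fun x : ℝ => Real.cos (n*x) * Real.log (1 - 2*r*Real.cos x + r^2))
      volume 0 (2*π) := ((contcos _).mul hQc).intervalIntegrable _ _
  rw [intervalIntegral.integral_add int1 int2]
  have iz : ∫ x in (0:ℝ)..(2*π), Real.cos (n*x) * Real.log C = 0 := by
    rw [show (fun x : ℝ => Real.cos (n*x) * Real.log C)
        = fun x : ℝ => Real.log C * Real.cos (((n:ℤ):ℝ)*x) by funext x; push_cast; ring]
    rw [intervalIntegral.integral_const_mul, intcos (n:ℤ) (by exact_mod_cast Nat.one_le_iff_ne_zero.mp hn), mul_zero]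
  rw [iz, zero_add, classic n hn r hrabs]
  have hcot : Real.cot (b/2) = 1/s := by
    rw [Real.cot_eq_cos_div_sin, hsv, one_div_div]
  have hrn : r^n = t^n * (1/s)^n := by
    rw [hrdef, div_pow, one_div, inv_pow]
    ring
  have h5 : (π:ℝ) ≠ 0 := ne_of_gt hpi
  have h6 : ((n:ℝ)) ≠ 0 := by exact_mod_cast Nat.one_le_iff_ne_zero.mp hn
  rw [hcot, hrn]
  field_simp
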